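/- Matrix inversion (Gessel–Stanton): Suppose β_k = ∑_{j=0}^{k} α_j / ( (Q;Q)_{k-j} (AQ;Q)_{k+j} ) for 0 ≤ k ≤ n-1. Then for 0 ≤ m ≤ n-1, α_m = ∑_{k=0}^{m} (-1)^{m+k} β_k · (AQ;Q)_{m+k-1} / (Q;Q)_{m-k} · (1 - A Q^{2m}) · Q^{\binom{m-k}{2}}. -/

import Mathlib

open Finset

noncomputable section

/-- The field of rational functions over `ℚ` in two variables `A`, `Q`. -/
abbrev K : Type := FractionRing (MvPolynomial (Fin 2) ℚ)

/-- The formal variable `A`. -/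
def A : K := algebraMap (MvPolynomial (Fin 2) ℚ) K (MvPolynomial.X 0)

/-- The formal variable `Q`. -/
def Q : K := algebraMap (MvPolynomial (Fin 2) ℚ) K (MvPolynomial.X 1)

/-- The `Q`-Pochhammer symbol `(X;Q)_r = ∏_{j=0}^{r-1} (1 - X Q^j)`. -/
def pch (X Qb : K) (r : ℕ) : K := ∏ j ∈ Finset.range r, (1 - X * Qb ^ j)

/-- The `Q`-Pochhammer symbol with integer index: for negative index `-r` it is
`(X;Q)_{-r} = 1 / ∏_{j=1}^{r} (1 - X Q^{-j})`. -/
def pchZ (X Qb : K) : ℤ → K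
  | Int.ofNat r => pch X Qb r
  | Int.negSucc r => (∏ j ∈ Finset.range (r + 1), (1 - X * Qb ^ (-(j : ℤ) - 1)))⁻¹

lemma pch_zero (X Qb : K) : pch X Qb 0 = 1 := by simp [pch]

lemma pch_succ (X Qb : K) (r : ℕ) : pch X Qb (r+1) = pch X Qb r * (1 - X * Qb ^ r) :=
  Finset.prod_range_succ _ _

lemma pch_add (X Qb : K) (a b : ℕ) :
    pch X Qb (a+b) = pch X Qb a * ∏ s ∈ Finset.range b, (1 - X * Qb ^ (a+s)) := by
  rw [pch, pch, Finset.prod_range_add]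

lemma algK_ne_zero (p : MvPolynomial (Fin 2) ℚ) (v : Fin 2 → ℚ) (h : MvPolynomial.eval v p ≠ 0) :
    algebraMap (MvPolynomial (Fin 2) ℚ) K p ≠ 0 := by
  intro h0
  have : p = 0 := IsFractionRing.injective (MvPolynomial (Fin 2) ℚ) K (by simpa using h0)
  simp [this] at h

lemma one_sub_Q_pow_ne (s : ℕ) (hs : s ≠ 0) : (1 : K) - Q ^ s ≠ 0 := by
  have : (1 : K) - Q ^ s =
      algebraMap (MvPolynomial (Fin 2) ℚ) K (1 - MvPolynomial.X 1 ^ s) := by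
    simp [Q, map_sub, map_pow]
  rw [this]
  apply algK_ne_zero _ (fun _ => 0)
  simp [zero_pow hs]

lemma one_sub_AQ_pow_ne (s : ℕ) : (1 : K) - A * Q ^ s ≠ 0 := by
  have : (1 : K) - A * Q ^ s =
      algebraMap (MvPolynomial (Fin 2) ℚ) K (1 - MvPolynomial.X 0 * MvPolynomial.X 1 ^ s) := by
    simp [A, Q, map_sub, map_mul, map_pow]
  rw [this]
  apply algK_ne_zero _ (fun _ => 0)
  simp

lemma pchQQ_ne (r : ℕ) : pch Q Q r ≠ 0 := by
  induction r with
  | zero => simp [pch_zero]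
  | succ r ih =>
    rw [pch_succ]
    refine mul_ne_zero ih ?_
    have : (1 : K) - Q * Q ^ r = 1 - Q ^ (r+1) := by ring
    rw [this]; exact one_sub_Q_pow_ne _ (Nat.succ_ne_zero r)

lemma pchAQ_ne (r : ℕ) : pch (A * Q) Q r ≠ 0 := by
  induction r with
  | zero => simp [pch_zero]
  | succ r ih =>
    rw [pch_succ]
    refine mul_ne_zero ih ?_
    have : (1 : K) - A * Q * Q ^ r = 1 - A * Q ^ (r+1) := by ring
    rw [this]; exact one_sub_AQ_pow_ne _

lemma Q_ne_zero : (Q : K) ≠ 0 := by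
  apply algK_ne_zero _ (fun _ => 1); simp

/-- Signed Gaussian binomial-type coefficient. -/
def gb (N i : ℕ) : K :=
  if i ≤ N then (-1)^(N-i) * Q^((N-i).choose 2) * pch Q Q N / (pch Q Q (N-i) * pch Q Q i)
  else 0

lemma gb_zero_right (N : ℕ) : gb N 0 = (-1)^N * Q^(N.choose 2) := by
  simp [gb, pch_zero, pchQQ_ne]

lemma gb_self (N : ℕ) : gb N N = 1 := by
  simp [gb, pch_zero]
  exact pchQQ_ne N

lemma gb_of_gt {N i : ℕ} (h : N < i) : gb N i = 0 := by simp [gb, Nat.not_le.mpr h]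

lemma gb_pascal (M j : ℕ) :
    gb (M + j + 2) (j + 1) = gb (M + j + 1) j - Q ^ (M + j + 1) * gb (M + j + 1) (j + 1) := by
  have h1 : (M + j + 2) - (j + 1) = M + 1 := by omega
  have h2 : (M + j + 1) - j = M + 1 := by omega
  have h3 : (M + j + 1) - (j + 1) = M := by omega
  have e1 : gb (M + j + 2) (j + 1) =
      (-1)^(M+1) * Q^((M+1).choose 2) * pch Q Q (M+j+2) / (pch Q Q (M+1) * pch Q Q (j+1)) := by
    rw [gb, if_pos (by omega), h1]
  have e2 : gb (M + j + 1) j =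
      (-1)^(M+1) * Q^((M+1).choose 2) * pch Q Q (M+j+1) / (pch Q Q (M+1) * pch Q Q j) := by
    rw [gb, if_pos (by omega), h2]
  have e3 : gb (M + j + 1) (j + 1) =
      (-1)^M * Q^(M.choose 2) * pch Q Q (M+j+1) / (pch Q Q M * pch Q Q (j+1)) := by
    rw [gb, if_pos (by omega), h3]
  rw [e1, e2, e3]
  have hc : (M+1).choose 2 = M.choose 2 + M := by
    simp [Nat.choose, Nat.add_comm]
  rw [hc]
  have r1 : pch Q Q (M+j+2) = pch Q Q (M+j+1) * (1 - Q * Q ^ (M+j+1)) := pch_succ _ _ _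
  have r2 : pch Q Q (M+1) = pch Q Q M * (1 - Q * Q ^ M) := pch_succ _ _ _
  have r3 : pch Q Q (j+1) = pch Q Q j * (1 - Q * Q ^ j) := pch_succ _ _ _
  rw [r1, r2, r3]
  have hM := pchQQ_ne M
  have hj := pchQQ_ne j
  have hMj := pchQQ_ne (M+j+1)
  have hQM : (1:K) - Q * Q ^ M ≠ 0 := by
    have := pchQQ_ne (M+1); rw [r2] at this; exact right_ne_zero_of_mul this
  have hQj : (1:K) - Q * Q ^ j ≠ 0 := by
    have := pchQQ_ne (j+1); rw [r3] at this; exact right_ne_zero_of_mul this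
  field_simp
  ring

lemma gb_pascal' (N i : ℕ) (h : i ≤ N) :
    gb (N+1) (i+1) = gb N i - Q ^ N * gb N (i+1) := by
  rcases Nat.lt_or_ge i N with hlt | hge
  · obtain ⟨M, rfl⟩ : ∃ M, N = M + i + 1 := ⟨N - i - 1, by omega⟩
    exact gb_pascal M i
  · have : i = N := le_antisymm h hge
    subst this
    rw [gb_self, gb_self, gb_of_gt (by omega)]
    ring

lemma gb_pascal_zero (N : ℕ) : gb (N+1) 0 = - (Q ^ N * gb N 0) := by
  rw [gb_zero_right, gb_zero_right]
  have hc : (N+1).choose 2 = N.choose 2 + N := by simp [Nat.choose, Nat.add_comm]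
  rw [hc, pow_add, pow_succ]
  ring

lemma vand (N : ℕ) (x : K) :
    ∑ i ∈ Finset.range (N+1), gb N i * x ^ i = ∏ t ∈ Finset.range N, (x - Q ^ t) := by
  induction N with
  | zero => simp [gb_self]
  | succ N ih =>
    rw [Finset.prod_range_succ, ← ih]
    rw [Finset.sum_range_succ' (fun i => gb (N+1) i * x ^ i) (N+1)]
    have e1 : ∀ i ∈ Finset.range (N+1),
        gb (N+1) (i+1) * x ^ (i+1) = gb N i * x ^ (i+1) - Q ^ N * (gb N (i+1) * x ^ (i+1)) := by
      intro i hi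
      rw [gb_pascal' N i (by simpa using Nat.lt_succ_iff.mp (Finset.mem_range.mp hi))]
      ring
    rw [Finset.sum_congr rfl e1, Finset.sum_sub_distrib, gb_pascal_zero]
    have e2 : ∑ i ∈ Finset.range (N+1), Q ^ N * (gb N (i+1) * x ^ (i+1))
        = Q ^ N * ((∑ i ∈ Finset.range (N+1), gb N i * x ^ i) - gb N 0) := by
      rw [← Finset.mul_sum]
      congr 1
      have h := Finset.sum_range_succ' (fun i => gb N i * x ^ i) (N+1)
      rw [Finset.sum_range_succ, gb_of_gt (Nat.lt_succ_self N)] at h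
      simp only [zero_mul, add_zero, pow_zero, mul_one] at h
      linear_combination -h
    rw [e2]
    have e3 : ∑ i ∈ Finset.range (N+1), gb N i * x ^ (i+1)
        = (∑ i ∈ Finset.range (N+1), gb N i * x ^ i) * x := by
      rw [Finset.sum_mul]; apply Finset.sum_congr rfl; intro i _; ring
    rw [e3]
    ring

lemma vand_zero (N d : ℕ) (hd : d < N) :
    ∑ i ∈ Finset.range (N+1), gb N i * (Q ^ d) ^ i = 0 := by
  rw [vand]
  apply Finset.prod_eq_zero (Finset.mem_range.mpr hd)
  ring

lemma ortho (N : ℕ) (hN : 1 ≤ N) (B : K) :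
    ∑ i ∈ Finset.range (N+1), gb N i * ∏ s ∈ Finset.range (N-1), (1 - B * Q ^ (i+s+1)) = 0 := by
  set g : Polynomial K := ∏ s ∈ Finset.range (N-1), (1 - Polynomial.C (B * Q ^ (s+1)) * Polynomial.X) with hg
  have hdeg : g.natDegree < N := by
    calc g.natDegree ≤ ∑ s ∈ Finset.range (N-1),
        ((1 : Polynomial K) - Polynomial.C (B * Q ^ (s+1)) * Polynomial.X).natDegree :=
          Polynomial.natDegree_prod_le _ _
    _ ≤ ∑ s ∈ Finset.range (N-1), 1 := by
        apply Finset.sum_le_sum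
        intro s _
        calc ((1 : Polynomial K) - Polynomial.C (B * Q ^ (s+1)) * Polynomial.X).natDegree
            ≤ max (1 : Polynomial K).natDegree (Polynomial.C (B * Q ^ (s+1)) * Polynomial.X).natDegree :=
              Polynomial.natDegree_sub_le _ _
          _ ≤ 1 := by
              simp only [Polynomial.natDegree_one, max_le_iff]
              refine ⟨Nat.zero_le _, ?_⟩
              calc (Polynomial.C (B * Q ^ (s+1)) * Polynomial.X).natDegree
                  ≤ (Polynomial.C (B * Q ^ (s+1))).natDegree + Polynomial.X.natDegree :=
                    Polynomial.natDegree_mul_le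
                _ ≤ 1 := by
                    simp only [← Polynomial.C_pow, ← Polynomial.C_mul, Polynomial.natDegree_C,
                      Polynomial.natDegree_X]
                    omega
    _ = N - 1 := by simp
    _ < N := by omega
  have heval : ∀ i : ℕ, ∏ s ∈ Finset.range (N-1), (1 - B * Q ^ (i+s+1)) = g.eval (Q ^ i) := by
    intro i
    rw [hg, Polynomial.eval_prod]
    apply Finset.prod_congr rfl
    intro s _
    simp [pow_add, pow_succ]
    ring
  calc ∑ i ∈ Finset.range (N+1), gb N i * ∏ s ∈ Finset.range (N-1), (1 - B * Q ^ (i+s+1))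
      = ∑ i ∈ Finset.range (N+1), gb N i * ∑ d ∈ Finset.range N, g.coeff d * (Q ^ i) ^ d := by
        apply Finset.sum_congr rfl
        intro i _
        rw [heval i, Polynomial.eval_eq_sum_range' hdeg]
    _ = ∑ d ∈ Finset.range N, g.coeff d * ∑ i ∈ Finset.range (N+1), gb N i * (Q ^ d) ^ i := by
        simp only [Finset.mul_sum]
        rw [Finset.sum_comm]
        apply Finset.sum_congr rfl; intro d _
        apply Finset.sum_congr rfl; intro i _
        rw [← pow_mul, ← pow_mul, Nat.mul_comm]
        ring
    _ = 0 := by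
        apply Finset.sum_eq_zero
        intro d hd
        rw [vand_zero N d (Finset.mem_range.mp hd)]
        ring

lemma pchZ_bridge (s : ℕ) : pchZ (A*Q) Q ((s:ℤ) - 1) * (1 - A * Q ^ s) = pch (A*Q) Q s := by
  cases s with
  | zero =>
    have h1 : ((0:ℕ):ℤ) - 1 = Int.negSucc 0 := by decide
    rw [h1]
    show (∏ j ∈ Finset.range 1, (1 - (A*Q) * Q ^ (-(j:ℤ) - 1)))⁻¹ * (1 - A * Q ^ 0) = pch (A*Q) Q 0
    rw [Finset.prod_range_one]
    have h2 : (A*Q) * Q ^ ((-(0:ℕ):ℤ) - 1) = A := by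
      have : ((-(0:ℕ):ℤ) - 1) = -1 := by decide
      rw [this, zpow_neg_one]
      field_simp [Q_ne_zero]
    rw [h2]
    have hA : (1:K) - A ≠ 0 := by
      have := one_sub_AQ_pow_ne 0
      simpa using this
    simp [pch]
    field_simp
  | succ r =>
    have h1 : ((r+1:ℕ):ℤ) - 1 = Int.ofNat r := by simp
    rw [h1]
    show pch (A*Q) Q r * (1 - A * Q ^ (r+1)) = pch (A*Q) Q (r+1)
    rw [pch_succ]
    ring

lemma pchZ_eq (s : ℕ) : pchZ (A*Q) Q ((s:ℤ) - 1) = pch (A*Q) Q s / (1 - A * Q ^ s) := by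
  rw [← pchZ_bridge s]
  field_simp [one_sub_AQ_pow_ne]

lemma term_eq (j d i : ℕ) (hi : i ≤ d+1) (c : K) :
    (-1:K)^((j+(d+1))+(j+i)) * (c / (pch Q Q ((j+i)-j) * pch (A*Q) Q ((j+i)+j))) *
      pchZ (A*Q) Q (((j+(d+1):ℕ):ℤ) + ((j+i:ℕ):ℤ) - 1) / pch Q Q ((j+(d+1))-(j+i)) *
      (1 - A*Q^(2*(j+(d+1)))) * Q^(((j+(d+1))-(j+i)).choose 2)
    = (c * (1 - A*Q^(2*(j+(d+1)))) / pch Q Q (d+1)) *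
      (gb (d+1) i * ∏ s ∈ Finset.range d, (1 - (A*Q^(2*j)) * Q^(i+s+1))) := by
  have hcast : ((j+(d+1):ℕ):ℤ) + ((j+i:ℕ):ℤ) - 1 = (((j+(d+1)+(j+i)):ℕ):ℤ) - 1 := by
    push_cast; ring
  rw [hcast, pchZ_eq]
  have harg1 : (j+i) - j = i := by omega
  have harg2 : (j+(d+1)) - (j+i) = d+1-i := by omega
  rw [harg1, harg2]
  have hp : pch (A*Q) Q (j+(d+1)+(j+i)) =
      pch (A*Q) Q ((j+i)+j) *
        ((∏ s ∈ Finset.range d, (1 - (A*Q^(2*j))*Q^(i+s+1))) * (1 - A*Q^(j+(d+1)+(j+i)))) := by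
    rw [show j+(d+1)+(j+i) = ((j+i)+j) + (d+1) by omega, pch_add, Finset.prod_range_succ]
    rw [mul_assoc]
    congr 1
    congr 1
    · apply Finset.prod_congr rfl; intro s _
      congr 1
      ring
    · congr 1
      ring
  rw [hp]
  have hgb : gb (d+1) i =
      (-1)^(d+1-i) * Q^((d+1-i).choose 2) * pch Q Q (d+1) / (pch Q Q (d+1-i) * pch Q Q i) := by
    rw [gb, if_pos hi]
  have hsign : ((-1:K))^((j+(d+1))+(j+i)) = (-1)^(d+1-i) := by
    rw [show (j+(d+1))+(j+i) = (d+1-i) + 2*(j+i) by omega, pow_add, pow_mul]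
    simp
  rw [hgb, hsign]
  have h1 := pchQQ_ne (d+1-i)
  have h2 := pchQQ_ne i
  have h3 := pchQQ_ne (d+1)
  have h4 := pchAQ_ne ((j+i)+j)
  have h5 := one_sub_AQ_pow_ne (j+(d+1)+(j+i))
  field_simp

lemma inner_zero (j d : ℕ) (c : K) :
    ∑ i ∈ Finset.range (d+2),
      (-1:K)^((j+(d+1))+(j+i)) * (c / (pch Q Q ((j+i)-j) * pch (A*Q) Q ((j+i)+j))) *
        pchZ (A*Q) Q (((j+(d+1):ℕ):ℤ) + ((j+i:ℕ):ℤ) - 1) / pch Q Q ((j+(d+1))-(j+i)) *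
        (1 - A*Q^(2*(j+(d+1)))) * Q^(((j+(d+1))-(j+i)).choose 2) = 0 := by
  have hterm : ∀ i ∈ Finset.range (d+2),
      (-1:K)^((j+(d+1))+(j+i)) * (c / (pch Q Q ((j+i)-j) * pch (A*Q) Q ((j+i)+j))) *
        pchZ (A*Q) Q (((j+(d+1):ℕ):ℤ) + ((j+i:ℕ):ℤ) - 1) / pch Q Q ((j+(d+1))-(j+i)) *
        (1 - A*Q^(2*(j+(d+1)))) * Q^(((j+(d+1))-(j+i)).choose 2)
      = (c * (1 - A*Q^(2*(j+(d+1)))) / pch Q Q (d+1)) *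
        (gb (d+1) i * ∏ s ∈ Finset.range d, (1 - (A*Q^(2*j)) * Q^(i+s+1))) := by
    intro i hi
    exact term_eq j d i (by have := Finset.mem_range.mp hi; omega) c
  rw [Finset.sum_congr rfl hterm, ← Finset.mul_sum]
  have h := ortho (d+1) (by omega) (A*Q^(2*j))
  simp only [Nat.add_sub_cancel] at h
  rw [h, mul_zero]

/-- Matrix inversion (Gessel–Stanton): if
`β_k = ∑_{j=0}^{k} α_j / ( (Q;Q)_{k-j} (AQ;Q)_{k+j} )` for `0 ≤ k ≤ n-1`, then
`α_m = ∑_{k=0}^{m} (-1)^{m+k} β_k (AQ;Q)_{m+k-1} / (Q;Q)_{m-k} · (1-AQ^{2m}) Q^{binom(m-k,2)}`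
for `0 ≤ m ≤ n-1`. -/
theorem gessel_stanton_inversion (n : ℕ) (α β : ℕ → K)
    (hβ : ∀ k, k < n →
      β k = ∑ j ∈ Finset.range (k + 1), α j / (pch Q Q (k - j) * pch (A * Q) Q (k + j))) :
    ∀ m, m < n →
      α m = ∑ k ∈ Finset.range (m + 1),
        (-1 : K) ^ (m + k) * β k * pchZ (A * Q) Q ((m : ℤ) + (k : ℤ) - 1) /
          pch Q Q (m - k) * (1 - A * Q ^ (2 * m)) * Q ^ ((m - k).choose 2) := by
  intro m hm
  have stepA : ∀ k ∈ Finset.range (m+1),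
      (-1 : K) ^ (m + k) * β k * pchZ (A * Q) Q ((m : ℤ) + (k : ℤ) - 1) /
          pch Q Q (m - k) * (1 - A * Q ^ (2 * m)) * Q ^ ((m - k).choose 2)
      = ∑ j ∈ Finset.range (k+1),
        (-1 : K) ^ (m + k) * (α j / (pch Q Q (k - j) * pch (A * Q) Q (k + j))) *
          pchZ (A * Q) Q ((m : ℤ) + (k : ℤ) - 1) /
          pch Q Q (m - k) * (1 - A * Q ^ (2 * m)) * Q ^ ((m - k).choose 2) := by
    intro k hk
    rw [hβ k (by have := Finset.mem_range.mp hk; omega)]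
    simp only [Finset.mul_sum, Finset.sum_mul, Finset.sum_div]
  rw [Finset.sum_congr rfl stepA]
  have swap := Finset.sum_Ico_Ico_comm 0 (m+1) (fun j k =>
      (-1 : K) ^ (m + k) * (α j / (pch Q Q (k - j) * pch (A * Q) Q (k + j))) *
        pchZ (A * Q) Q ((m : ℤ) + (k : ℤ) - 1) /
        pch Q Q (m - k) * (1 - A * Q ^ (2 * m)) * Q ^ ((m - k).choose 2))
  simp only [Finset.range_eq_Ico]
  rw [← swap]
  have stepC : ∀ j ∈ Finset.Ico 0 (m+1), j ≠ m →
      (∑ k ∈ Finset.Ico j (m+1),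
        (-1 : K) ^ (m + k) * (α j / (pch Q Q (k - j) * pch (A * Q) Q (k + j))) *
          pchZ (A * Q) Q ((m : ℤ) + (k : ℤ) - 1) /
          pch Q Q (m - k) * (1 - A * Q ^ (2 * m)) * Q ^ ((m - k).choose 2)) = 0 := by
    intro j hj hjm
    have hjlt : j < m := by
      have := Finset.mem_Ico.mp hj; omega
    obtain ⟨d, rfl⟩ : ∃ d, m = j + (d+1) := ⟨m - j - 1, by omega⟩
    rw [Finset.sum_Ico_eq_sum_range]
    rw [show (j+(d+1)+1) - j = d+2 by omega]
    have := inner_zero j d (α j)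
    rw [← this]
  rw [Finset.sum_eq_single_of_mem m (by simp) stepC]
  rw [Finset.sum_Ico_eq_sum_range, show (m+1) - m = 1 by omega, Finset.sum_range_one]
  rw [show m + 0 = m by omega]
  rw [show m - m = 0 by omega, pch_zero]
  rw [show (m:ℤ) + (m:ℤ) - 1 = ((m+m:ℕ):ℤ) - 1 by push_cast; ring, pchZ_eq]
  rw [show (0:ℕ).choose 2 = 0 by rfl]
  rw [show m + m = 2*m by omega]
  rw [show (-1:K)^(2*m) = 1 by rw [pow_mul]; simp]
  have h1 := pchAQ_ne (2*m)
  have h2 := one_sub_AQ_pow_ne (2*m)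
  field_simp

end
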